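/- Let b > 0, σ > 0, let ν be a nonzero measure on (0,∞) with ∫_0^∞ (z∧1) ν(dz) < ∞, and fix t > 0. Define Δ_t(u) := ∫_0^t ∫_0^∞ (e^{zψ(s,u)} − 1) ν(dz) ds for real u ≤ 0. Then (a) the function u ↦ Δ_t(u) is strictly increasing on (−∞,−1]; and (b) for every δ > 0, e^{−uδ} e^{Δ_t(u)} → ∞ as u → −∞. -/

import Mathlib

open MeasureTheory Filter Set
open scoped ENNReal

/-- `ψ(t,u) = u e^{−bt} / (1 − (σ²u/(2b))(1 − e^{−bt}))`. -/
noncomputable def psi (b σ t u : ℝ) : ℝ :=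
  u * Real.exp (-b * t) / (1 - σ ^ 2 * u / (2 * b) * (1 - Real.exp (-b * t)))

section Aux

variable {b σ : ℝ}

lemma den_ge_one (hb : 0 < b) {s u : ℝ} (hs : 0 ≤ s) (hu : u ≤ 0) :
    1 ≤ 1 - σ ^ 2 * u / (2 * b) * (1 - Real.exp (-b * s)) := by
  have h1 : Real.exp (-b * s) ≤ 1 := Real.exp_le_one_iff.mpr (by nlinarith)
  have h2 : σ ^ 2 * u / (2 * b) ≤ 0 :=
    div_nonpos_of_nonpos_of_nonneg (by nlinarith [sq_nonneg σ]) (by linarith)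
  nlinarith

lemma psi_nonpos (hb : 0 < b) {s u : ℝ} (hs : 0 ≤ s) (hu : u ≤ 0) : psi b σ s u ≤ 0 := by
  have hD := den_ge_one (σ := σ) hb hs hu
  exact div_nonpos_of_nonpos_of_nonneg (by nlinarith [Real.exp_pos (-b*s)]) (by linarith)

lemma psi_ge (hb : 0 < b) {s u : ℝ} (hs : 0 ≤ s) (hu : u ≤ 0) : u ≤ psi b σ s u := by
  have hD := den_ge_one (σ := σ) hb hs hu
  have hDpos : (0:ℝ) < 1 - σ ^ 2 * u / (2 * b) * (1 - Real.exp (-b * s)) := by linarith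
  rw [psi, le_div_iff₀ hDpos]
  have he1 : Real.exp (-b * s) ≤ 1 := Real.exp_le_one_iff.mpr (by nlinarith)
  have he0 : 0 < Real.exp (-b * s) := Real.exp_pos _
  nlinarith

lemma abs_psi_le (hb : 0 < b) {s u : ℝ} (hs : 0 ≤ s) (hu : u ≤ 0) : |psi b σ s u| ≤ -u :=
  abs_le.mpr ⟨by simpa using psi_ge (σ := σ) hb hs hu, by linarith [psi_nonpos (σ := σ) hb hs hu]⟩

lemma one_sub_exp_ge (x : ℝ) (hx : 0 ≤ x) : x * Real.exp (-x) ≤ 1 - Real.exp (-x) := by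
  have h1 := Real.add_one_le_exp x
  have h2 : Real.exp (-x) * Real.exp x = 1 := by rw [← Real.exp_add]; simp
  nlinarith [Real.exp_pos (-x)]

lemma psi_ge2 (hb : 0 < b) (hσ : 0 < σ) {s u : ℝ} (hs : 0 < s) (hu : u < 0) :
    -(2 / (σ ^ 2 * s)) ≤ psi b σ s u := by
  have hE : 0 < Real.exp (-b * s) := Real.exp_pos _
  set E := Real.exp (-b * s) with hEdef
  have key : σ ^ 2 * (-u) * s * E / 2
      ≤ 1 - σ ^ 2 * u / (2 * b) * (1 - E) := by
    have h1 : b * s * Real.exp (-(b * s)) ≤ 1 - Real.exp (-(b * s)) :=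
      one_sub_exp_ge (b * s) (by positivity)
    have hbs : -(b*s) = -b * s := by ring
    rw [hbs] at h1
    have hnu : (0:ℝ) < -u := neg_pos.mpr hu
    have hc : (0:ℝ) < σ ^ 2 * (-u) / (2 * b) :=
      div_pos (mul_pos (pow_pos hσ 2) hnu) (by linarith)
    have h4 : σ^2*(-u)/(2*b)*(b*s*E) ≤ σ^2*(-u)/(2*b)*(1 - E) :=
      mul_le_mul_of_nonneg_left h1 hc.le
    have h5 : σ^2*(-u)/(2*b)*(b*s*E) = σ ^ 2 * (-u) * s * E / 2 := by
      field_simp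
    have hid : σ^2*u/(2*b)*(1-E) = -(σ^2*(-u)/(2*b)*(1 - E)) := by ring
    linarith [h4, h5, hid]
  have hnu : (0:ℝ) < -u := neg_pos.mpr hu
  have hD' : (0:ℝ) < σ ^ 2 * (-u) * s * E / 2 := by
    have := mul_pos (mul_pos (mul_pos (pow_pos hσ 2) hnu) hs) hE
    linarith
  have hDpos : (0:ℝ) < 1 - σ ^ 2 * u / (2 * b) * (1 - E) := lt_of_lt_of_le hD' key
  rw [psi, neg_le, ← hEdef, ← neg_div]
  have h6 : -(u * E) / (1 - σ ^ 2 * u / (2 * b) * (1 - E))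
      ≤ -(u * E) / (σ ^ 2 * (-u) * s * E / 2) :=
    div_le_div_of_nonneg_left (by nlinarith) hD' key
  have h7 : -(u * E) / (σ ^ 2 * (-u) * s * E / 2) = 2 / (σ ^ 2 * s) := by
    have h0u : u ≠ 0 := ne_of_lt hu
    have h0E : E ≠ 0 := ne_of_gt hE
    have h0σ : σ ≠ 0 := ne_of_gt hσ
    have h0s : s ≠ 0 := ne_of_gt hs
    field_simp
  linarith [h6, h7.le, h7.ge]

lemma psi_strictMono (hb : 0 < b) (hσ : 0 < σ) {s u₁ u₂ : ℝ} (hs : 0 < s)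
    (h12 : u₁ < u₂) (hu₂ : u₂ ≤ 0) : psi b σ s u₁ < psi b σ s u₂ := by
  have hu₁ : u₁ ≤ 0 := by linarith
  have hD₁ := den_ge_one (σ := σ) hb hs.le hu₁
  have hD₂ := den_ge_one (σ := σ) hb hs.le hu₂
  have hE : 0 < Real.exp (-b * s) := Real.exp_pos _
  have hE1 : Real.exp (-b * s) < 1 := by
    rw [Real.exp_lt_one_iff]; nlinarith
  rw [psi, psi, div_lt_div_iff₀ (by linarith) (by linarith)]
  have key : u₂ * Real.exp (-b*s) * (1 - σ^2*u₁/(2*b)*(1-Real.exp (-b*s)))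
      - u₁ * Real.exp (-b*s) * (1 - σ^2*u₂/(2*b)*(1-Real.exp (-b*s)))
      = Real.exp (-b*s) * (u₂ - u₁) := by ring
  linarith [key, mul_pos hE (sub_pos.mpr h12)]

end Aux

lemma abs_exp_sub_one_le {x z : ℝ} (hx : x ≤ 0) (hz : 0 < z) :
    |Real.exp (z * x) - 1| ≤ (1 + |x|) * min z 1 := by
  have hzx : z * x ≤ 0 := mul_nonpos_of_nonneg_of_nonpos hz.le hx
  have h1 : Real.exp (z * x) ≤ 1 := Real.exp_le_one_iff.mpr hzx
  have h2 : 1 + z * x ≤ Real.exp (z * x) := by linarith [Real.add_one_le_exp (z*x)]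
  rw [abs_of_nonpos (by linarith), abs_of_nonpos hx]
  rcases le_total z 1 with h | h
  · rw [min_eq_left h]; nlinarith
  · rw [min_eq_right h]; nlinarith [Real.exp_pos (z*x)]

lemma exp_sub_one_lower {x z : ℝ} (hx : x ≤ 0) (hz : 0 < z) :
    -((1 + |x|) * min z 1) ≤ Real.exp (z * x) - 1 :=
  neg_le_of_neg_le (le_trans (neg_le_abs _) (abs_exp_sub_one_le hx hz))

lemma integral_pos_of_pos' {μ : Measure ℝ} {f : ℝ → ℝ} (hμ : μ ≠ 0)
    (hf : Integrable f μ) (hpos : ∀ᵐ x ∂μ, 0 < f x) : 0 < ∫ x, f x ∂μ := by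
  rw [integral_pos_iff_support_of_nonneg_ae (hpos.mono fun x h => h.le) hf]
  by_contra h
  push_neg at h
  have hsupp : μ (Function.support f) = 0 := le_antisymm h (by simp)
  have hcompl : μ (Function.support f)ᶜ = 0 := by
    refine measure_mono_null (fun x hx => ?_) (ae_iff.mp hpos)
    simp only [Set.mem_compl_iff, Function.mem_support, not_not] at hx
    simp [Set.mem_setOf_eq, hx]
  have : μ Set.univ = 0 := by
    have := measure_union_le (μ := μ) (Function.support f) (Function.support f)ᶜ
    rw [Set.union_compl_self, hsupp, hcompl] at this
    simpa using this
  exact hμ (Measure.measure_univ_eq_zero.mp this)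

lemma min_integrable (ν : Measure ℝ)
    (hν : ∫⁻ z in Set.Ioi (0 : ℝ), ENNReal.ofReal (min z 1) ∂ν < ⊤) :
    IntegrableOn (fun z => min z 1) (Set.Ioi 0) ν := by
  have hmeas : AEStronglyMeasurable (fun z : ℝ => min z 1) (ν.restrict (Set.Ioi 0)) :=
    (continuous_id.min continuous_const).aestronglyMeasurable
  refine ⟨hmeas, ?_⟩
  have h0 : 0 ≤ᶠ[ae (ν.restrict (Set.Ioi 0))] fun z => min z 1 := by
    filter_upwards [ae_restrict_mem measurableSet_Ioi] with z hz
    exact le_min hz.le one_pos.le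
  rw [hasFiniteIntegral_iff_ofReal h0]
  exact hν

section Mid

variable {b σ : ℝ}

lemma inner_integrable (ν : Measure ℝ)
    (hν : ∫⁻ z in Set.Ioi (0 : ℝ), ENNReal.ofReal (min z 1) ∂ν < ⊤)
    {x : ℝ} (hx : x ≤ 0) :
    IntegrableOn (fun z => Real.exp (z * x) - 1) (Set.Ioi 0) ν := by
  have hmin := min_integrable ν hν
  refine Integrable.mono' (hmin.const_mul (1 + |x|)) ?_ ?_
  · exact ((Real.continuous_exp.comp (continuous_id.mul continuous_const)).sub
      continuous_const).aestronglyMeasurable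
  · filter_upwards [ae_restrict_mem measurableSet_Ioi] with z hz
    rw [Real.norm_eq_abs]
    exact abs_exp_sub_one_le hx hz

lemma inner_nonpos (ν : Measure ℝ) {x : ℝ} (hx : x ≤ 0) :
    ∫ z in Set.Ioi (0:ℝ), (Real.exp (z * x) - 1) ∂ν ≤ 0 := by
  apply integral_nonpos_of_ae
  filter_upwards [ae_restrict_mem measurableSet_Ioi] with z hz
  have hzx : z * x ≤ 0 := mul_nonpos_of_nonneg_of_nonpos (le_of_lt hz) hx
  have := Real.exp_le_one_iff.mpr hzx
  simp only [Pi.zero_apply]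
  linarith

lemma inner_lower (ν : Measure ℝ)
    (hν : ∫⁻ z in Set.Ioi (0 : ℝ), ENNReal.ofReal (min z 1) ∂ν < ⊤)
    {x : ℝ} (hx : x ≤ 0) :
    -((1 + |x|) * ∫ z in Set.Ioi (0:ℝ), min z 1 ∂ν)
      ≤ ∫ z in Set.Ioi (0:ℝ), (Real.exp (z * x) - 1) ∂ν := by
  have hmin := min_integrable ν hν
  have h := integral_mono_ae ((hmin.const_mul (1 + |x|)).neg) (inner_integrable ν hν hx) ?_
  · simp only [Pi.neg_apply] at h
    rw [integral_neg, integral_const_mul] at h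
    simpa using h
  · filter_upwards [ae_restrict_mem measurableSet_Ioi] with z hz
    exact exp_sub_one_lower hx hz

lemma psi_continuousAt (hb : 0 < b) {u : ℝ} (hu : u ≤ 0) {s₀ : ℝ} (hs₀ : 0 < s₀) :
    ContinuousAt (fun s => psi b σ s u) s₀ := by
  have hnum : Continuous fun s : ℝ => u * Real.exp (-b * s) := by continuity
  have hden : Continuous fun s : ℝ =>
      1 - σ ^ 2 * u / (2 * b) * (1 - Real.exp (-b * s)) := by continuity
  exact hnum.continuousAt.div hden.continuousAt
    (ne_of_gt (lt_of_lt_of_le one_pos (den_ge_one hb hs₀.le hu)))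

lemma F_continuousAt (hb : 0 < b) (ν : Measure ℝ)
    (hν : ∫⁻ z in Set.Ioi (0 : ℝ), ENNReal.ofReal (min z 1) ∂ν < ⊤)
    {u : ℝ} (hu : u ≤ 0) {s₀ : ℝ} (hs₀ : 0 < s₀) :
    ContinuousAt (fun s => ∫ z in Set.Ioi (0:ℝ),
      (Real.exp (z * psi b σ s u) - 1) ∂ν) s₀ := by
  apply continuousAt_of_dominated (bound := fun z => (1 + |u|) * min z 1)
  · exact Eventually.of_forall fun s =>
      ((Real.continuous_exp.comp (continuous_id.mul continuous_const)).sub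
        continuous_const).aestronglyMeasurable
  · filter_upwards [eventually_gt_nhds hs₀] with s hs
    filter_upwards [ae_restrict_mem measurableSet_Ioi] with z hz
    have hψ : psi b σ s u ≤ 0 := psi_nonpos hb hs.le hu
    have habs : |psi b σ s u| ≤ |u| := by
      rw [abs_of_nonpos hu]; exact abs_psi_le hb hs.le hu
    rw [Real.norm_eq_abs]
    refine le_trans (abs_exp_sub_one_le hψ hz) ?_
    have hmin0 : 0 ≤ min z 1 := le_min (le_of_lt hz) zero_le_one
    nlinarith
  · exact (min_integrable ν hν).const_mul _
  · refine ae_of_all _ fun z => ?_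
    have h1 : ContinuousAt (fun s => z * psi b σ s u) s₀ :=
      continuousAt_const.mul (psi_continuousAt hb hu hs₀)
    exact (Real.continuous_exp.continuousAt.comp h1).sub continuousAt_const

lemma F_integrableOn (hb : 0 < b) (ν : Measure ℝ)
    (hν : ∫⁻ z in Set.Ioi (0 : ℝ), ENNReal.ofReal (min z 1) ∂ν < ⊤)
    {u : ℝ} (hu : u ≤ 0) (t : ℝ) :
    IntegrableOn (fun s => ∫ z in Set.Ioi (0:ℝ),
      (Real.exp (z * psi b σ s u) - 1) ∂ν) (Set.Ioc 0 t) := by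
  have hA0 : 0 ≤ ∫ z in Set.Ioi (0:ℝ), min z 1 ∂ν := by
    apply integral_nonneg_of_ae
    filter_upwards [ae_restrict_mem measurableSet_Ioi] with z hz
    exact le_min (le_of_lt hz) zero_le_one
  refine Integrable.mono'
    ((integrableOn_const_iff).mpr (Or.inr (by rw [Real.volume_Ioc]; exact ENNReal.ofReal_lt_top))
      : IntegrableOn (fun _ : ℝ => (1 + |u|) * ∫ z in Set.Ioi (0:ℝ), min z 1 ∂ν) _ _) ?_ ?_
  · have hc : ContinuousOn (fun s => ∫ z in Set.Ioi (0:ℝ),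
        (Real.exp (z * psi b σ s u) - 1) ∂ν) (Set.Ioi 0) :=
      fun s hs => (F_continuousAt hb ν hν hu hs).continuousWithinAt
    exact (hc.aestronglyMeasurable measurableSet_Ioi).mono_measure
      (Measure.restrict_mono Set.Ioc_subset_Ioi_self le_rfl)
  · filter_upwards [ae_restrict_mem measurableSet_Ioc] with s hs
    have hψ : psi b σ s u ≤ 0 := psi_nonpos hb hs.1.le hu
    have habs : |psi b σ s u| ≤ |u| := by
      rw [abs_of_nonpos hu]; exact abs_psi_le hb hs.1.le hu
    rw [Real.norm_eq_abs, abs_le]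
    constructor
    · refine le_trans ?_ (inner_lower ν hν hψ)
      have h1 : (1 + |psi b σ s u|) * (∫ z in Set.Ioi (0:ℝ), min z 1 ∂ν)
          ≤ (1 + |u|) * ∫ z in Set.Ioi (0:ℝ), min z 1 ∂ν :=
        mul_le_mul_of_nonneg_right (by linarith) hA0
      linarith
    · refine le_trans (inner_nonpos ν hψ) ?_
      have : 0 ≤ |u| := abs_nonneg u
      nlinarith

end Mid

theorem Delta_strictMono_and_blowup (b σ t : ℝ) (hb : 0 < b) (hσ : 0 < σ) (ht : 0 < t)
    (ν : Measure ℝ) (hνsupp : ν (Set.Iic 0) = 0) (hν0 : ν (Set.Ioi 0) ≠ 0)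
    (hν : ∫⁻ z in Set.Ioi (0 : ℝ), ENNReal.ofReal (min z 1) ∂ν < ⊤) :
    StrictMonoOn
        (fun u : ℝ => ∫ s in Set.Ioc (0 : ℝ) t,
          ∫ z in Set.Ioi (0 : ℝ), (Real.exp (z * psi b σ s u) - 1) ∂ν)
        (Set.Iic (-1 : ℝ)) ∧
      ∀ δ : ℝ, 0 < δ →
        Filter.Tendsto
          (fun u : ℝ => Real.exp (-u * δ) *
            Real.exp (∫ s in Set.Ioc (0 : ℝ) t,
              ∫ z in Set.Ioi (0 : ℝ), (Real.exp (z * psi b σ s u) - 1) ∂ν))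
          Filter.atBot Filter.atTop := by
  have hA0 : 0 ≤ ∫ z in Set.Ioi (0:ℝ), min z 1 ∂ν := by
    apply integral_nonneg_of_ae
    filter_upwards [ae_restrict_mem measurableSet_Ioi] with z hz
    exact le_min (le_of_lt hz) zero_le_one
  set A : ℝ := ∫ z in Set.Ioi (0:ℝ), min z 1 ∂ν with hAdef
  have hν0' : ν.restrict (Set.Ioi 0) ≠ 0 := by
    intro h
    exact hν0 (by rw [← Measure.restrict_apply_univ, h]; simp)
  have hvol0 : (volume.restrict (Set.Ioc (0:ℝ) t)) ≠ 0 := by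
    intro h
    have h2 : volume (Set.Ioc (0:ℝ) t) = 0 := by
      rw [← Measure.restrict_apply_univ, h]; simp
    rw [Real.volume_Ioc] at h2
    rw [ENNReal.ofReal_eq_zero] at h2
    linarith
  constructor
  · -- strict monotonicity
    intro u₁ hu₁ u₂ hu₂ h12
    simp only [Set.mem_Iic] at hu₁ hu₂
    have hu₁0 : u₁ ≤ 0 := by linarith
    have hu₂0 : u₂ ≤ 0 := by linarith
    have key : 0 < ∫ s in Set.Ioc (0:ℝ) t,
        ((∫ z in Set.Ioi (0:ℝ), (Real.exp (z * psi b σ s u₂) - 1) ∂ν)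
          - ∫ z in Set.Ioi (0:ℝ), (Real.exp (z * psi b σ s u₁) - 1) ∂ν) := by
      apply integral_pos_of_pos' hvol0
      · exact (F_integrableOn hb ν hν hu₂0 t).sub (F_integrableOn hb ν hν hu₁0 t)
      · rw [ae_restrict_iff' measurableSet_Ioc]
        refine ae_of_all _ fun s hs => ?_
        have hinner : 0 < ∫ z in Set.Ioi (0:ℝ),
            ((Real.exp (z * psi b σ s u₂) - 1) - (Real.exp (z * psi b σ s u₁) - 1)) ∂ν := by
          apply integral_pos_of_pos' hν0'
          · exact (inner_integrable ν hν (psi_nonpos hb hs.1.le hu₂0)).sub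
              (inner_integrable ν hν (psi_nonpos hb hs.1.le hu₁0))
          · rw [ae_restrict_iff' measurableSet_Ioi]
            refine ae_of_all _ fun z hz => ?_
            have hψ := psi_strictMono hb hσ hs.1 h12 hu₂0
            have hzz : z * psi b σ s u₁ < z * psi b σ s u₂ :=
              mul_lt_mul_of_pos_left hψ hz
            have := Real.exp_lt_exp.mpr hzz
            linarith
        rw [integral_sub (inner_integrable ν hν (psi_nonpos hb hs.1.le hu₂0))
          (inner_integrable ν hν (psi_nonpos hb hs.1.le hu₁0))] at hinner
        linarith
    rw [integral_sub (F_integrableOn hb ν hν hu₂0 t) (F_integrableOn hb ν hν hu₁0 t)] at key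
    exact sub_pos.mp key
  · -- blow-up
    intro δ hδ
    have hJint : IntegrableOn (fun s : ℝ => s ^ (-(1/2) : ℝ)) (Set.Ioc 0 t) :=
      (intervalIntegral.intervalIntegrable_rpow' (by norm_num)).1
    set J : ℝ := ∫ s in Set.Ioc (0:ℝ) t, s ^ (-(1/2) : ℝ) with hJdef
    set K : ℝ := Real.sqrt (2 / σ ^ 2) with hKdef
    have hK0 : 0 ≤ K := Real.sqrt_nonneg _
    set C : ℝ := A * K * J with hCdef
    -- main lower bound
    have hmain : ∀ u : ℝ, u ≤ -1 →
        -(A * t + C * Real.sqrt (-u)) ≤ ∫ s in Set.Ioc (0:ℝ) t,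
          ∫ z in Set.Ioi (0:ℝ), (Real.exp (z * psi b σ s u) - 1) ∂ν := by
      intro u hu
      have hu0 : u ≤ 0 := by linarith
      have hu0' : u < 0 := by linarith
      have hnu : (0:ℝ) < -u := by linarith
      -- pointwise bound on |psi|
      have hψbound : ∀ s ∈ Set.Ioc (0:ℝ) t,
          |psi b σ s u| ≤ K * Real.sqrt (-u) * s ^ (-(1/2) : ℝ) := by
        intro s hs
        have hs0 : 0 < s := hs.1
        have h1 : |psi b σ s u| ≤ -u := abs_psi_le hb hs0.le hu0
        have h2 : -(2 / (σ ^ 2 * s)) ≤ psi b σ s u := psi_ge2 hb hσ hs0 hu0'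
        have h2' : |psi b σ s u| ≤ 2 / (σ ^ 2 * s) := by
          rw [abs_le]
          exact ⟨h2, le_trans (psi_nonpos hb hs0.le hu0) (by positivity)⟩
        have hprod : (0:ℝ) ≤ (-u) * (2 / (σ ^ 2 * s)) := by positivity
        have hsq : |psi b σ s u| ≤ Real.sqrt ((-u) * (2 / (σ ^ 2 * s))) := by
          rw [Real.le_sqrt (abs_nonneg _) hprod]
          have := abs_nonneg (psi b σ s u)
          nlinarith
        refine le_trans hsq (le_of_eq ?_)
        have hre : (-u) * (2 / (σ ^ 2 * s)) = (2 / σ ^ 2) * ((-u) * s⁻¹) := by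
          field_simp
        rw [hre, Real.sqrt_mul (by positivity), Real.sqrt_mul hnu.le, hKdef]
        rw [Real.sqrt_inv]
        rw [show ((-(1/2) : ℝ)) = -(1/2 : ℝ) from rfl, Real.rpow_neg hs0.le,
          ← Real.sqrt_eq_rpow]
        ring
      have hstep : ∀ s ∈ Set.Ioc (0:ℝ) t,
          -(A + A * (K * Real.sqrt (-u)) * s ^ (-(1/2) : ℝ))
            ≤ ∫ z in Set.Ioi (0:ℝ), (Real.exp (z * psi b σ s u) - 1) ∂ν := by
        intro s hs
        have hψ : psi b σ s u ≤ 0 := psi_nonpos hb hs.1.le hu0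
        refine le_trans ?_ (inner_lower ν hν hψ)
        rw [← hAdef]
        have h1 := hψbound s hs
        have habs : 0 ≤ |psi b σ s u| := abs_nonneg _
        nlinarith
      -- integrate
      have hint1 : IntegrableOn
          (fun s : ℝ => -(A + A * (K * Real.sqrt (-u)) * s ^ (-(1/2) : ℝ)))
          (Set.Ioc 0 t) := by
        apply Integrable.neg
        exact ((integrableOn_const_iff).mpr (Or.inr (by
          rw [Real.volume_Ioc]; exact ENNReal.ofReal_lt_top))).add
          (hJint.const_mul _)
      have hmono := setIntegral_mono_on hint1 (F_integrableOn hb ν hν hu0 t)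
        measurableSet_Ioc hstep
      refine le_trans (le_of_eq ?_) hmono
      rw [integral_neg, integral_add ((integrableOn_const_iff (C := A)).mpr (Or.inr (by
          rw [Real.volume_Ioc]; exact ENNReal.ofReal_lt_top))) (hJint.const_mul _),
        integral_const_mul, setIntegral_const]
      rw [Real.volume_real_Ioc_of_le (by linarith), smul_eq_mul]
      rw [hCdef, ← hJdef]
      ring_nf
    -- assemble the tendsto
    simp only [← Real.exp_add]
    apply Real.tendsto_exp_atTop.comp
    apply tendsto_atTop_mono' atBot
      (f₁ := fun u : ℝ => δ / 2 * (-u) + (-(A * t + C ^ 2 / (2 * δ))))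
    · rw [EventuallyLE, eventually_atBot]
      refine ⟨-1, fun u hu => ?_⟩
      have h1 := hmain u hu
      have hs0 : 0 ≤ Real.sqrt (-u) := Real.sqrt_nonneg _
      have hsq : Real.sqrt (-u) ^ 2 = -u := Real.sq_sqrt (by linarith)
      have key2 : C * Real.sqrt (-u) ≤ δ / 2 * (-u) + C ^ 2 / (2 * δ) := by
        rw [← sub_nonneg]
        have expand : δ / 2 * (-u) + C ^ 2 / (2 * δ) - C * Real.sqrt (-u)
            = (δ * Real.sqrt (-u) - C) ^ 2 / (2 * δ) := by
          rw [← hsq]; field_simp; ring_nf; simp only [hsq]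
        rw [expand]
        exact div_nonneg (sq_nonneg _) (by linarith)
      linarith
    · apply tendsto_atTop_add_const_right
      exact Tendsto.const_mul_atTop (half_pos hδ) tendsto_neg_atBot_atTop
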